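/- arXiv:1407.3975 — 3 statements merged into one kernel-verified Lean document; each statement's English description precedes it below -/
import Mathlib

section
/- For all p ∈ (0,1) and α ∈ (0, 1/2), the lower bound of the noisy write channel model is strictly smaller than that of the noiseless model: h₂((1 - p + 2αp)/2) - h₂(α)/2 - h₂(p + α - 2αp)/2 < h₂((1-p)/2) - h₂(p)/2. -/
open MeasureTheory

noncomputable def binEnt (t : ℝ) : ℝ :=
  -(t * Real.logb 2 t) - (1 - t) * Real.logb 2 (1 - t)

def bern (q : ℝ) (b : Bool) : ℝ := if b then q else 1 - q

/-- Symmetric Markov transition kernel on Bool with flip probability β. -/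
def mtrans (β : ℝ) (a b : Bool) : ℝ := if b = a then 1 - β else β

private lemma binEnt_eq (t : ℝ) : binEnt t = Real.binEntropy t / Real.log 2 := by
  unfold binEnt Real.binEntropy Real.logb
  rw [Real.log_inv, Real.log_inv]
  ring

/-! ### Strict convexity of `ψ x = x (log (1+sx) - log (1-sx))` -/

private noncomputable def psi (s x : ℝ) : ℝ := x * (Real.log (1+s*x) - Real.log (1-s*x))

private noncomputable def psi1 (s x : ℝ) : ℝ :=
  (Real.log (1+s*x) - Real.log (1-s*x)) + x * (s/(1+s*x) + s/(1-s*x))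

private noncomputable def psi2 (s x : ℝ) : ℝ :=
  2*(s/(1+s*x) + s/(1-s*x)) + 4*s^3*x^2/((1+s*x)^2*(1-s*x)^2)

private lemma lin_deriv (s x : ℝ) : HasDerivAt (fun y : ℝ => 1 + s*y) s x := by
  simpa using ((hasDerivAt_id x).const_mul s).const_add 1

private lemma lin_deriv' (s x : ℝ) : HasDerivAt (fun y : ℝ => 1 - s*y) (-s) x := by
  simpa using ((hasDerivAt_id x).const_mul s).const_sub 1

private lemma hasDerivAt_psi (s x : ℝ) (h1 : 0 < 1 + s*x) (h2 : 0 < 1 - s*x) :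
    HasDerivAt (psi s) (psi1 s x) x := by
  have hla : HasDerivAt (fun y : ℝ => Real.log (1+s*y)) ((1+s*x)⁻¹ * s) x :=
    by have := (Real.hasDerivAt_log h1.ne').comp x (lin_deriv s x); exact this
  have hlb : HasDerivAt (fun y : ℝ => Real.log (1-s*y)) ((1-s*x)⁻¹ * (-s)) x :=
    by have := (Real.hasDerivAt_log h2.ne').comp x (lin_deriv' s x); exact this
  have := (hasDerivAt_id x).mul (hla.sub hlb)
  refine this.congr_deriv ?_
  unfold psi1
  simp only [id_eq, div_eq_mul_inv, one_mul, Pi.sub_apply]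
  ring

private lemma hasDerivAt_psi1 (s x : ℝ) (h1 : 0 < 1 + s*x) (h2 : 0 < 1 - s*x) :
    HasDerivAt (psi1 s) (psi2 s x) x := by
  have hla : HasDerivAt (fun y : ℝ => Real.log (1+s*y)) ((1+s*x)⁻¹ * s) x :=
    by have := (Real.hasDerivAt_log h1.ne').comp x (lin_deriv s x); exact this
  have hlb : HasDerivAt (fun y : ℝ => Real.log (1-s*y)) ((1-s*x)⁻¹ * (-s)) x :=
    by have := (Real.hasDerivAt_log h2.ne').comp x (lin_deriv' s x); exact this
  have hia : HasDerivAt (fun y : ℝ => s/(1+s*y)) (-(s*s)/(1+s*x)^2) x := by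
    simpa [div_eq_mul_inv, mul_comm, mul_assoc, neg_div] using
      ((lin_deriv s x).inv h1.ne').const_mul s
  have hib : HasDerivAt (fun y : ℝ => s/(1-s*y)) (s*s/(1-s*x)^2) x := by
    have := ((lin_deriv' s x).inv h2.ne').const_mul s
    refine this.congr_deriv ?_
    field_simp
  have := (hla.sub hlb).add ((hasDerivAt_id x).mul (hia.add hib))
  refine this.congr_deriv ?_
  unfold psi2
  simp only [id_eq, one_mul, Pi.add_apply]
  field_simp
  ring

private lemma strictConvex_psi (s : ℝ) (hs : s ∈ Set.Ioo (0:ℝ) 1) :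
    StrictConvexOn ℝ (Set.Icc (-1 : ℝ) 1) (psi s) := by
  obtain ⟨hs0, hs1⟩ := hs
  have hsub : ∀ x : ℝ, x ∈ Set.Icc (-1:ℝ) 1 → 0 < 1 + s*x ∧ 0 < 1 - s*x := by
    intro x hx
    obtain ⟨hx1, hx2⟩ := hx
    constructor <;> nlinarith
  refine strictConvexOn_of_deriv2_pos (convex_Icc _ _) ?_ ?_
  · intro x hx
    obtain ⟨h1, h2⟩ := hsub x hx
    exact (hasDerivAt_psi s x h1 h2).continuousAt.continuousWithinAt
  · intro x hx
    rw [interior_Icc] at hx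
    obtain ⟨h1, h2⟩ := hsub x (Set.Ioo_subset_Icc_self hx)
    have hU : ∀ y ∈ Set.Ioo (-(s⁻¹)) s⁻¹, 0 < 1 + s*y ∧ 0 < 1 - s*y := by
      intro y hy
      obtain ⟨hy1, hy2⟩ := hy
      have h1' : -(1:ℝ) < s*y := by
        have := (mul_lt_mul_iff_right₀ hs0).mpr hy1
        rw [mul_neg, mul_inv_cancel₀ hs0.ne'] at this
        linarith
      have h2' : s*y < 1 := by
        have := (mul_lt_mul_iff_right₀ hs0).mpr hy2
        rw [mul_inv_cancel₀ hs0.ne'] at this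
        linarith
      constructor <;> linarith
    have hxU : x ∈ Set.Ioo (-(s⁻¹)) s⁻¹ := by
      have hinv : 1 < s⁻¹ := (one_lt_inv₀ hs0).mpr hs1
      obtain ⟨hx1, hx2⟩ := hx
      constructor <;> [linarith; linarith]
    have heq : Set.EqOn (deriv (psi s)) (psi1 s) (Set.Ioo (-(s⁻¹)) s⁻¹) := by
      intro y hy
      obtain ⟨hy1, hy2⟩ := hU y hy
      exact (hasDerivAt_psi s y hy1 hy2).deriv
    have hev : deriv (psi s) =ᶠ[nhds x] psi1 s :=
      Filter.eventuallyEq_of_mem (isOpen_Ioo.mem_nhds hxU) heq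
    have : deriv^[2] (psi s) x = deriv (psi1 s) x := by
      simp only [Function.iterate_succ, Function.iterate_zero, Function.comp_apply, id_eq]
      exact hev.deriv_eq
    rw [this, (hasDerivAt_psi1 s x h1 h2).deriv]
    unfold psi2
    have t1 : 0 < s/(1+s*x) + s/(1-s*x) := by positivity
    have t2 : 0 ≤ 4*s^3*x^2/((1+s*x)^2*(1-s*x)^2) := by positivity
    linarith

/-- Key inequality: `(1-u)·A(s(1-u)/2) < A(s) + u·A(su)` where `A x = log(1+x)-log(1-x)`. -/
private lemma key (s u : ℝ) (hs : s ∈ Set.Ioo (0:ℝ) 1) (hu : u ∈ Set.Ioo (-1:ℝ) 1) :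
    (1-u) * (Real.log (1+s*((1-u)/2)) - Real.log (1-s*((1-u)/2)))
      < (Real.log (1+s) - Real.log (1-s)) + u * (Real.log (1+s*u) - Real.log (1-s*u)) := by
  have hconv := strictConvex_psi s hs
  have hm : (-1 : ℝ) ∈ Set.Icc (-1:ℝ) 1 := by constructor <;> norm_num
  have hum : u ∈ Set.Icc (-1:ℝ) 1 := Set.Ioo_subset_Icc_self hu
  have hne : (-1 : ℝ) ≠ u := by intro h; exact absurd (h ▸ hu.1) (lt_irrefl _)
  have h := hconv.2 hm hum hne (by norm_num : (0:ℝ) < 1/2) (by norm_num : (0:ℝ) < 1/2)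
    (by norm_num)
  simp only [smul_eq_mul, psi] at h
  have e1 : (1:ℝ) + s * (1/2 * -1 + 1/2 * u) = 1 - s*((1-u)/2) := by ring
  have e2 : (1:ℝ) - s * (1/2 * -1 + 1/2 * u) = 1 + s*((1-u)/2) := by ring
  have e3 : (1:ℝ) + s * -1 = 1 - s := by ring
  have e4 : (1:ℝ) - s * -1 = 1 + s := by ring
  rw [e1, e2, e3, e4] at h
  nlinarith [h]

/-! ### The function `φ` interpolating between the two bounds -/

private noncomputable def phi (p s : ℝ) : ℝ :=
  Real.binEntropy ((1 - p*s)/2) - Real.binEntropy ((1 - s)/2)/2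
    - Real.binEntropy ((1 - (1-2*p)*s)/2)/2

private lemma hasDerivAt_E (c s : ℝ) (h1 : 0 < 1 + c*s) (h2 : 0 < 1 - c*s) :
    HasDerivAt (fun t => Real.binEntropy ((1 - c*t)/2))
      ((Real.log (1+c*s) - Real.log (1-c*s)) * (-c/2)) s := by
  have hg : HasDerivAt (fun t : ℝ => (1 - c*t)/2) (-c/2) s := by
    simpa using (((hasDerivAt_id s).const_mul c).const_sub 1).div_const 2
  have h0 : (1 - c*s)/2 ≠ 0 := by positivity
  have hlt : (1 - c*s)/2 ≠ 1 := by intro h; nlinarith [h]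
  have hE := (Real.hasDerivAt_binEntropy h0 hlt).comp s hg
  refine hE.congr_deriv ?_
  rw [show (1:ℝ) - (1 - c*s)/2 = (1+c*s)/2 by ring,
    Real.log_div h1.ne' two_ne_zero, Real.log_div h2.ne' two_ne_zero]
  ring

private lemma hasDerivAt_phi (p s : ℝ) (hp : p ∈ Set.Ioo (0:ℝ) 1) (hs : s ∈ Set.Ioo (0:ℝ) 1) :
    HasDerivAt (phi p)
      ((Real.log (1+p*s) - Real.log (1-p*s)) * (-p/2)
        - (Real.log (1+s) - Real.log (1-s)) * (-1/2) / 2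
        - (Real.log (1+(1-2*p)*s) - Real.log (1-(1-2*p)*s)) * (-(1-2*p)/2) / 2) s := by
  obtain ⟨hp0, hp1⟩ := hp
  obtain ⟨hs0, hs1⟩ := hs
  have h1 : HasDerivAt (fun t => Real.binEntropy ((1 - p*t)/2))
      ((Real.log (1+p*s) - Real.log (1-p*s)) * (-p/2)) s :=
    hasDerivAt_E p s (by nlinarith) (by nlinarith)
  have h2 : HasDerivAt (fun t => Real.binEntropy ((1 - t)/2))
      ((Real.log (1+s) - Real.log (1-s)) * (-1/2)) s := by
    have := hasDerivAt_E 1 s (by nlinarith) (by nlinarith)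
    simpa using this
  have h3 : HasDerivAt (fun t => Real.binEntropy ((1 - (1-2*p)*t)/2))
      ((Real.log (1+(1-2*p)*s) - Real.log (1-(1-2*p)*s)) * (-(1-2*p)/2)) s :=
    hasDerivAt_E (1-2*p) s (by nlinarith) (by nlinarith)
  exact (h1.sub (h2.div_const 2)).sub (h3.div_const 2)

private lemma phi_strictMono (p : ℝ) (hp : p ∈ Set.Ioo (0:ℝ) 1) :
    StrictMonoOn (phi p) (Set.Icc (0:ℝ) 1) := by
  apply strictMonoOn_of_deriv_pos (convex_Icc _ _)
  · apply Continuous.continuousOn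
    unfold phi
    fun_prop
  · intro s hs
    rw [interior_Icc] at hs
    rw [(hasDerivAt_phi p s hp hs).deriv]
    have hu : (1 - 2*p) ∈ Set.Ioo (-1:ℝ) 1 := by
      obtain ⟨hp0, hp1⟩ := hp
      constructor <;> linarith
    have hk := key s (1-2*p) hs hu
    rw [show s*((1 - (1-2*p))/2) = p*s by ring] at hk
    have hk2 : (1-(1-2*p)) * (Real.log (1+p*s) - Real.log (1-p*s))
        < (Real.log (1+s) - Real.log (1-s))
          + (1-2*p) * (Real.log (1+s*(1-2*p)) - Real.log (1-s*(1-2*p))) := hk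
    rw [show s*(1-2*p) = (1-2*p)*s by ring] at hk2
    nlinarith [hk2]

/-- For p ∈ (0,1) and α ∈ (0,1/2), the noisy-model lower bound is
strictly smaller than the noiseless one. -/
theorem stmt_9 (p α : ℝ) (hp : p ∈ Set.Ioo (0:ℝ) 1) (hα : α ∈ Set.Ioo (0:ℝ) (1/2)) :
    binEnt ((1 - p + 2 * α * p) / 2) - binEnt α / 2 - binEnt (p + α - 2 * α * p) / 2
      < binEnt ((1 - p) / 2) - binEnt p / 2 := by
  obtain ⟨hα0, hα1⟩ := hα
  have hmem1 : 1 - 2*α ∈ Set.Icc (0:ℝ) 1 := ⟨by linarith, by linarith⟩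
  have h := phi_strictMono p hp hmem1 (by norm_num : (1:ℝ) ∈ Set.Icc (0:ℝ) 1) (by linarith)
  have hlog : 0 < Real.log 2 := Real.log_pos one_lt_two
  have hL : binEnt ((1 - p + 2 * α * p) / 2) - binEnt α / 2 - binEnt (p + α - 2 * α * p) / 2
      = phi p (1-2*α) / Real.log 2 := by
    rw [binEnt_eq, binEnt_eq, binEnt_eq]
    unfold phi
    rw [show (1 - p*(1-2*α))/2 = (1-p+2*α*p)/2 by ring,
        show (1 - (1-2*α))/2 = α by ring,
        show (1 - (1-2*p)*(1-2*α))/2 = p + α - 2*α*p by ring]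
    ring
  have hR : binEnt ((1-p)/2) - binEnt p / 2 = phi p 1 / Real.log 2 := by
    rw [binEnt_eq, binEnt_eq]
    unfold phi
    rw [show (1 - p*1)/2 = (1-p)/2 by ring, show ((1:ℝ) - 1)/2 = 0 by ring,
        show (1 - (1-2*p)*1)/2 = p by ring, Real.binEntropy_zero]
    ring
  rw [hL, hR]
  exact (div_lt_div_iff_of_pos_right hlog).mpr h
end

section
/- For the write channel with i.u.d. inputs, P(Y_i = 1 | Y_{i-1} = 1) = [ (1 + p(1-p))(1 + 2α(α - 1)) + (1 - p(1-p))(2α(1-α)) ] / 2, obtained by summing the probabilities of the fourteen joint configurations of (W_i, Z_i, X_i, X_{i-1}, W_{i-1}, Z_{i-1}, X_{i-2}) compatible with Y_i = Y_{i-1} = 1. -/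
open MeasureTheory

abbrev I7 := Bool × Bool × Bool × Bool × Bool × Bool × Bool

lemma partition_measure {Ω : Type*} [MeasurableSpace Ω] (μ : Measure Ω) [IsProbabilityMeasure μ]
    (T : Ω → I7) (g : I7 → ℝ)
    (hg : ∀ v, 0 ≤ g v)
    (hsum : ∑ v : I7, g v = 1)
    (h : ∀ v, (μ (T ⁻¹' {v})).toReal = g v)
    (P : I7 → Prop) [DecidablePred P] :
    (μ {ω | P (T ω)}).toReal = ∑ v ∈ Finset.univ.filter P, g v := by
  set f : I7 → ENNReal := fun v => ENNReal.ofReal (g v) with hf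
  have h' : ∀ v, μ (T ⁻¹' {v}) = f v := by
    intro v
    rw [← ENNReal.ofReal_toReal (measure_ne_top μ _), h]
  have hsum' : ∑ v : I7, f v = 1 := by
    rw [← ENNReal.ofReal_sum_of_nonneg (fun v _ => hg v), hsum, ENNReal.ofReal_one]
  set E := {ω | P (T ω)} with hE
  have hEeq : E = ⋃ v ∈ Finset.univ.filter P, T ⁻¹' {v} := by
    ext ω; simp [hE]
  have hCeq : Eᶜ = ⋃ v ∈ Finset.univ.filter (fun v => ¬ P v), T ⁻¹' {v} := by
    ext ω; simp [hE]
  have hle1 : μ E ≤ ∑ v ∈ Finset.univ.filter P, f v := by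
    rw [hEeq]
    refine le_trans (measure_biUnion_finset_le _ _) ?_
    exact le_of_eq (Finset.sum_congr rfl fun v _ => h' v)
  have hle2 : μ Eᶜ ≤ ∑ v ∈ Finset.univ.filter (fun v => ¬ P v), f v := by
    rw [hCeq]
    refine le_trans (measure_biUnion_finset_le _ _) ?_
    exact le_of_eq (Finset.sum_congr rfl fun v _ => h' v)
  have hAB : (∑ v ∈ Finset.univ.filter P, f v)
      + (∑ v ∈ Finset.univ.filter (fun v => ¬ P v), f v) = 1 := by
    rw [Finset.sum_filter_add_sum_filter_not]; exact hsum'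
  have htot : (1 : ENNReal) ≤ μ E + μ Eᶜ := by
    have := measure_union_le (μ := μ) E Eᶜ
    rwa [Set.union_compl_self, measure_univ] at this
  have hkey : μ E = ∑ v ∈ Finset.univ.filter P, f v := by
    refine le_antisymm hle1 ?_
    have h1 : (∑ v ∈ Finset.univ.filter P, f v) + μ Eᶜ ≤ μ E + μ Eᶜ := by
      calc (∑ v ∈ Finset.univ.filter P, f v) + μ Eᶜ
          ≤ (∑ v ∈ Finset.univ.filter P, f v)
            + (∑ v ∈ Finset.univ.filter (fun v => ¬ P v), f v) := by
            exact add_le_add_right hle2 _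
        _ = 1 := hAB
        _ ≤ μ E + μ Eᶜ := htot
    exact (ENNReal.add_le_add_iff_right (measure_ne_top μ Eᶜ)).mp h1
  rw [hkey, hf]
  rw [← ENNReal.ofReal_sum_of_nonneg (fun v _ => hg v)]
  exact ENNReal.toReal_ofReal (Finset.sum_nonneg fun v _ => hg v)

/-- For the write channel with i.u.d. inputs,
P(Y_i = 1 | Y_{i-1} = 1) = ((1+p(1-p))(1+2α(α-1)) + (1-p(1-p))(2α(1-α)))/2. -/
theorem stmt_11 {Ω : Type*} [MeasurableSpace Ω] (μ : Measure Ω) [IsProbabilityMeasure μ]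
    (X0 X1 X2 Z0 Z1 W0 W1 Y0 Y1 : Ω → Bool) (p α : ℝ)
    (hp : p ∈ Set.Icc (0:ℝ) 1) (hα : α ∈ Set.Icc (0:ℝ) 1)
    (hjoint : ∀ a b c c0 c1 d0 d1 : Bool,
      (μ {ω | X0 ω = a ∧ X1 ω = b ∧ X2 ω = c ∧ Z0 ω = c0 ∧ Z1 ω = c1
              ∧ W0 ω = d0 ∧ W1 ω = d1}).toReal
        = (1/2) * (1/2) * (1/2) * bern p c0 * bern p c1 * bern α d0 * bern α d1)
    (hY0 : ∀ ω, Y0 ω = Bool.xor (if Z0 ω then X1 ω else X0 ω) (W0 ω))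
    (hY1 : ∀ ω, Y1 ω = Bool.xor (if Z1 ω then X2 ω else X1 ω) (W1 ω)) :
    (μ {ω | Y1 ω = true ∧ Y0 ω = true}).toReal / (μ {ω | Y0 ω = true}).toReal
      = ((1 + p * (1 - p)) * (1 + 2 * α * (α - 1))
          + (1 - p * (1 - p)) * (2 * α * (1 - α))) / 2 := by
  obtain ⟨hp0, hp1⟩ := hp
  obtain ⟨ha0, ha1⟩ := hα
  have hbern : ∀ (q : ℝ), 0 ≤ q → q ≤ 1 → ∀ b : Bool, 0 ≤ bern q b := by
    intro q h0 h1 b; cases b <;> simp [bern] <;> linarith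
  set T : Ω → I7 := fun ω => (X0 ω, X1 ω, X2 ω, Z0 ω, Z1 ω, W0 ω, W1 ω) with hT
  set g : I7 → ℝ := fun v =>
    (1/2) * (1/2) * (1/2) * bern p v.2.2.2.1 * bern p v.2.2.2.2.1
      * bern α v.2.2.2.2.2.1 * bern α v.2.2.2.2.2.2 with hgdef
  have hg : ∀ v, 0 ≤ g v := by
    rintro ⟨a, b, c, c0, c1, d0, d1⟩
    have := hbern p hp0 hp1
    have := hbern α ha0 ha1
    simp only [hgdef]
    have h1 := hbern p hp0 hp1 c0
    have h2 := hbern p hp0 hp1 c1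
    have h3 := hbern α ha0 ha1 d0
    have h4 := hbern α ha0 ha1 d1
    have : (0:ℝ) ≤ (1/2) * (1/2) * (1/2) := by norm_num
    exact mul_nonneg (mul_nonneg (mul_nonneg (mul_nonneg this h1) h2) h3) h4
  have hsum : ∑ v : I7, g v = 1 := by
    simp [hgdef, Fintype.sum_prod_type, bern]
    ring
  have h : ∀ v, (μ (T ⁻¹' {v})).toReal = g v := by
    rintro ⟨a, b, c, c0, c1, d0, d1⟩
    have hset : T ⁻¹' {(a, b, c, c0, c1, d0, d1)}
        = {ω | X0 ω = a ∧ X1 ω = b ∧ X2 ω = c ∧ Z0 ω = c0 ∧ Z1 ω = c1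
              ∧ W0 ω = d0 ∧ W1 ω = d1} := by
      ext ω; simp [hT, Prod.ext_iff, and_assoc]
    rw [hset, hjoint]
  set y0f : I7 → Bool := fun v => Bool.xor (if v.2.2.2.1 then v.2.1 else v.1) v.2.2.2.2.2.1
    with hy0f
  set y1f : I7 → Bool := fun v => Bool.xor (if v.2.2.2.2.1 then v.2.2.1 else v.2.1) v.2.2.2.2.2.2
    with hy1f
  have hE1 : {ω | Y1 ω = true ∧ Y0 ω = true}
      = {ω | (fun v => y1f v = true ∧ y0f v = true) (T ω)} := by
    ext ω; simp [hT, hy0f, hy1f, hY0 ω, hY1 ω]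
  have hE0 : {ω | Y0 ω = true} = {ω | (fun v => y0f v = true) (T ω)} := by
    ext ω; simp [hT, hy0f, hY0 ω]
  rw [hE1, hE0,
    partition_measure μ T g hg hsum h (fun v => y1f v = true ∧ y0f v = true),
    partition_measure μ T g hg hsum h (fun v => y0f v = true)]
  have hD : ∑ v ∈ Finset.univ.filter (fun v => y0f v = true), g v = 1/2 := by
    rw [Finset.sum_filter]
    simp [hgdef, hy0f, Fintype.sum_prod_type, bern]
    ring
  have hN : ∑ v ∈ Finset.univ.filter (fun v => y1f v = true ∧ y0f v = true), g v
      = ((1 + p * (1 - p)) * (1 + 2 * α * (α - 1))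
          + (1 - p * (1 - p)) * (2 * α * (1 - α))) / 4 := by
    rw [Finset.sum_filter]
    simp [hgdef, hy0f, hy1f, Fintype.sum_prod_type, bern]
    ring
  rw [hD, hN]
  ring
end

section
/- For the write channel with symmetric Markov-1 input with flip probability β, P(Y_i = 0 | Y_{i-1} = 0) = ((1-β) + 2β²p(1-p))((1-α)² + α²) + 2α(1-α)β(p² + (1-p)² + 2(1-β)p(1-p)). -/
open MeasureTheory

set_option maxHeartbeats 2000000

lemma key_measure {Ω : Type*} [MeasurableSpace Ω] (μ : Measure Ω) [IsProbabilityMeasure μ]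
    {T : Type*} [Fintype T] [DecidableEq T] (F : Ω → T)
    (htot : ∑ t, μ (F ⁻¹' {t}) = 1) (S : Finset T) :
    μ (F ⁻¹' ↑S) = ∑ t ∈ S, μ (F ⁻¹' {t}) := by
  have hle : ∀ (S : Finset T), μ (F ⁻¹' ↑S) ≤ ∑ t ∈ S, μ (F ⁻¹' {t}) := by
    intro S
    have h : F ⁻¹' ↑S = ⋃ t ∈ S, F ⁻¹' {t} := by ext ω; simp
    rw [h]
    exact measure_biUnion_finset_le S _
  refine le_antisymm (hle S) ?_
  have h1 : (1:ENNReal) ≤ μ (F ⁻¹' ↑S) + μ (F ⁻¹' ↑Sᶜ) := by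
    have h : (F ⁻¹' ↑S) ∪ (F ⁻¹' ↑Sᶜ) = Set.univ := by
      ext ω; simp [Finset.mem_compl]
    calc (1:ENNReal) = μ Set.univ := (measure_univ).symm
    _ = μ ((F ⁻¹' ↑S) ∪ (F ⁻¹' ↑Sᶜ)) := by rw [h]
    _ ≤ _ := measure_union_le _ _
  have h3 : ∑ t ∈ S, μ (F ⁻¹' {t}) + ∑ t ∈ Sᶜ, μ (F ⁻¹' {t}) = 1 := by
    rw [Finset.sum_add_sum_compl]; exact htot
  have hfin : ∑ t ∈ Sᶜ, μ (F ⁻¹' {t}) ≠ ⊤ := by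
    intro h
    rw [h] at h3
    simp at h3
  have h4 : ∑ t ∈ S, μ (F ⁻¹' {t}) + ∑ t ∈ Sᶜ, μ (F ⁻¹' {t})
      ≤ μ (F ⁻¹' ↑S) + ∑ t ∈ Sᶜ, μ (F ⁻¹' {t}) := by
    rw [h3]
    exact h1.trans (add_le_add_right (hle Sᶜ) _)
  exact (ENNReal.add_le_add_iff_right hfin).mp h4



/-- For the write channel with symmetric Markov-1 input (flip prob β,
uniform start), P(Y_i = 0 | Y_{i-1} = 0)
= ((1-β) + 2β²p(1-p))((1-α)² + α²) + 2α(1-α)β(p² + (1-p)² + 2(1-β)p(1-p)). -/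
theorem stmt_12 {Ω : Type*} [MeasurableSpace Ω] (μ : Measure Ω) [IsProbabilityMeasure μ]
    (X0 X1 X2 Z0 Z1 W0 W1 Y0 Y1 : Ω → Bool) (p α β : ℝ)
    (hp : p ∈ Set.Icc (0:ℝ) 1) (hα : α ∈ Set.Icc (0:ℝ) 1) (hβ : β ∈ Set.Icc (0:ℝ) 1)
    (hjoint : ∀ a b c c0 c1 d0 d1 : Bool,
      (μ {ω | X0 ω = a ∧ X1 ω = b ∧ X2 ω = c ∧ Z0 ω = c0 ∧ Z1 ω = c1
              ∧ W0 ω = d0 ∧ W1 ω = d1}).toReal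
        = (1/2) * mtrans β a b * mtrans β b c
            * bern p c0 * bern p c1 * bern α d0 * bern α d1)
    (hY0 : ∀ ω, Y0 ω = Bool.xor (if Z0 ω then X1 ω else X0 ω) (W0 ω))
    (hY1 : ∀ ω, Y1 ω = Bool.xor (if Z1 ω then X2 ω else X1 ω) (W1 ω)) :
    (μ {ω | Y1 ω = false ∧ Y0 ω = false}).toReal / (μ {ω | Y0 ω = false}).toReal
      = ((1 - β) + 2 * β ^ 2 * p * (1 - p)) * ((1 - α) ^ 2 + α ^ 2)
          + 2 * α * (1 - α) * β * (p ^ 2 + (1 - p) ^ 2 + 2 * (1 - β) * p * (1 - p)) := by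
  classical
  set F : Ω → Bool × Bool × Bool × Bool × Bool × Bool × Bool :=
    fun ω => (X0 ω, X1 ω, X2 ω, Z0 ω, Z1 ω, W0 ω, W1 ω) with hF
  have hw : ∀ t : Bool × Bool × Bool × Bool × Bool × Bool × Bool,
      (μ (F ⁻¹' {t})).toReal
        = (1/2) * mtrans β t.1 t.2.1 * mtrans β t.2.1 t.2.2.1
            * bern p t.2.2.2.1 * bern p t.2.2.2.2.1 * bern α t.2.2.2.2.2.1 * bern α t.2.2.2.2.2.2 := by
    rintro ⟨a,b,c,c0,c1,d0,d1⟩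
    have hs : F ⁻¹' {(a,b,c,c0,c1,d0,d1)}
        = {ω | X0 ω = a ∧ X1 ω = b ∧ X2 ω = c ∧ Z0 ω = c0 ∧ Z1 ω = c1
              ∧ W0 ω = d0 ∧ W1 ω = d1} := by
      ext ω; simp [hF, Prod.ext_iff]
    rw [hs]; exact hjoint a b c c0 c1 d0 d1
  have hfin : ∀ t : Bool × Bool × Bool × Bool × Bool × Bool × Bool,
      μ (F ⁻¹' {t}) ≠ ⊤ := fun t => measure_ne_top μ _
  have htotR : ∑ t : Bool × Bool × Bool × Bool × Bool × Bool × Bool,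
      (μ (F ⁻¹' {t})).toReal = 1 := by
    simp only [hw, Fintype.sum_prod_type, Fintype.sum_bool, mtrans, bern]
    norm_num
    ring
  have htot : ∑ t : Bool × Bool × Bool × Bool × Bool × Bool × Bool,
      μ (F ⁻¹' {t}) = 1 := by
    have h := ENNReal.toReal_sum (s := Finset.univ)
      (f := fun t : Bool × Bool × Bool × Bool × Bool × Bool × Bool => μ (F ⁻¹' {t}))
      (fun t _ => hfin t)
    have hne : ∑ t : Bool × Bool × Bool × Bool × Bool × Bool × Bool, μ (F ⁻¹' {t}) ≠ ⊤ := by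
      exact (ENNReal.sum_lt_top.mpr (fun t _ => lt_top_iff_ne_top.mpr (hfin t))).ne
    rw [← ENNReal.ofReal_toReal hne, h, htotR]
    simp
  have hmeas : ∀ (S : Finset (Bool × Bool × Bool × Bool × Bool × Bool × Bool)),
      (μ (F ⁻¹' ↑S)).toReal = ∑ t ∈ S, (μ (F ⁻¹' {t})).toReal := by
    intro S
    rw [key_measure μ F htot S, ENNReal.toReal_sum (fun t _ => hfin t)]
  -- numerator
  have hnumset : {ω | Y1 ω = false ∧ Y0 ω = false}
      = F ⁻¹' ↑(Finset.univ.filter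
          (fun t : Bool × Bool × Bool × Bool × Bool × Bool × Bool =>
            Bool.xor (if t.2.2.2.2.1 then t.2.2.1 else t.2.1) t.2.2.2.2.2.2 = false
            ∧ Bool.xor (if t.2.2.2.1 then t.2.1 else t.1) t.2.2.2.2.2.1 = false)) := by
    ext ω
    simp [hY0, hY1, hF, and_comm]
  have hdenset : {ω | Y0 ω = false}
      = F ⁻¹' ↑(Finset.univ.filter
          (fun t : Bool × Bool × Bool × Bool × Bool × Bool × Bool =>
            Bool.xor (if t.2.2.2.1 then t.2.1 else t.1) t.2.2.2.2.2.1 = false)) := by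
    ext ω
    simp [hY0, hF]
  have hnum : (μ {ω | Y1 ω = false ∧ Y0 ω = false}).toReal
      = ∑ t ∈ (Finset.univ.filter
          (fun t : Bool × Bool × Bool × Bool × Bool × Bool × Bool =>
            Bool.xor (if t.2.2.2.2.1 then t.2.2.1 else t.2.1) t.2.2.2.2.2.2 = false
            ∧ Bool.xor (if t.2.2.2.1 then t.2.1 else t.1) t.2.2.2.2.2.1 = false)),
          (μ (F ⁻¹' {t})).toReal := by
    rw [hnumset, hmeas]
  have hden : (μ {ω | Y0 ω = false}).toReal = 1/2 := by
    rw [hdenset, hmeas]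
    simp only [Finset.sum_filter, hw, Fintype.sum_prod_type, Fintype.sum_bool, mtrans, bern]
    norm_num
    ring
  rw [hden, hnum]
  simp only [Finset.sum_filter, hw, Fintype.sum_prod_type, Fintype.sum_bool, mtrans, bern]
  norm_num
  ring
end
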